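/- For any real random variable X and any continuous decreasing function ψ: ℝ → ℝ, the left-continuous quantile function satisfies F_{ψ(X)}^{-1}(z) = ψ(F_X^{-1}((1-z)+)) for all z in (0,1), where F_X^{-1}(t+) is the right-continuous quantile function of X. -/

import Mathlib

open MeasureTheory

variable {Ω : Type*} [MeasurableSpace Ω]

/-- The cumulative distribution function of `X` under `μ`. -/
noncomputable def cdf (μ : Measure Ω) (X : Ω → ℝ) (x : ℝ) : ℝ :=
  (μ {ω | X ω ≤ x}).toReal

/-- The left-continuous quantile function `F_X^{-1}(t) = inf {x : F_X(x) ≥ t}`. -/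
noncomputable def qL (μ : Measure Ω) (X : Ω → ℝ) (t : ℝ) : ℝ :=
  sInf {x : ℝ | t ≤ cdf μ X x}

/-- The right-continuous quantile function `F_X^{-1}(t+) = inf {x : F_X(x) > t}`. -/
noncomputable def qR (μ : Measure Ω) (X : Ω → ℝ) (t : ℝ) : ℝ :=
  sInf {x : ℝ | t < cdf μ X x}

theorem stmt_3 (μ : Measure Ω) [IsProbabilityMeasure μ] (X : Ω → ℝ) (hX : Measurable X)
    (ψ : ℝ → ℝ) (hψc : Continuous ψ) (hψa : StrictAnti ψ)
    (z : ℝ) (hz : z ∈ Set.Ioo (0 : ℝ) 1) :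
    qL μ (fun ω => ψ (X ω)) z = ψ (qR μ X (1 - z)) := by
  obtain ⟨hz0, hz1⟩ := hz
  set ν : Measure ℝ := μ.map X with hν
  have hνP : IsProbabilityMeasure ν := Measure.isProbabilityMeasure_map hX.aemeasurable
  have hFeq : ∀ x, cdf μ X x = ProbabilityTheory.cdf ν x := by
    intro x
    rw [ProbabilityTheory.cdf_eq_real, Measure.real, hν, Measure.map_apply hX measurableSet_Iic]
    rfl
  set F : ℝ → ℝ := fun x => cdf μ X x with hF
  have hmono : Monotone F := by
    intro x y hxy
    rw [hF]; simp only [hFeq]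
    exact ProbabilityTheory.monotone_cdf ν hxy
  -- the set defining qR
  set T : Set ℝ := {x : ℝ | 1 - z < cdf μ X x} with hT
  have hTne : T.Nonempty := by
    have h := ProbabilityTheory.tendsto_cdf_atTop ν
    have : ∀ᶠ x in Filter.atTop, 1 - z < ProbabilityTheory.cdf ν x :=
      h.eventually_const_lt (by linarith)
    obtain ⟨x, hx⟩ := this.exists
    exact ⟨x, by rw [hT, Set.mem_setOf_eq, hFeq]; exact hx⟩
  have hTbdd : BddBelow T := by
    have h := ProbabilityTheory.tendsto_cdf_atBot ν
    have : ∀ᶠ x in Filter.atBot, ProbabilityTheory.cdf ν x < 1 - z :=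
      h.eventually_lt_const (by linarith)
    obtain ⟨b, hb⟩ := this.exists
    refine ⟨b, fun x hx => ?_⟩
    by_contra hbx
    push_neg at hbx
    have hxT : 1 - z < cdf μ X x := hx
    have h2 : cdf μ X x ≤ cdf μ X b := hmono hbx.le
    rw [← hFeq] at hb
    linarith
  set a : ℝ := qR μ X (1 - z) with ha
  have ha' : a = sInf T := rfl
  have hlt : ∀ x, x < a → cdf μ X x ≤ 1 - z := by
    intro x hx
    by_contra h
    push_neg at h
    exact absurd (csInf_le hTbdd h) (not_le.mpr hx)
  have hgt : ∀ x, a < x → 1 - z < cdf μ X x := by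
    intro x hx
    obtain ⟨t, htT, htx⟩ := exists_lt_of_csInf_lt hTne hx
    exact lt_of_lt_of_le htT (hmono htx.le)
  -- cdf of Y := ψ ∘ X
  set S : Set ℝ := {y : ℝ | z ≤ cdf μ (fun ω => ψ (X ω)) y} with hS
  have hmeasψ : ∀ y : ℝ, MeasurableSet {ω | ψ (X ω) ≤ y} := fun y =>
    (hψc.measurable.comp hX) measurableSet_Iic
  -- Step 1: ψ a ∈ S
  have hψaS : ψ a ∈ S := by
    have hset : {ω | ψ (X ω) ≤ ψ a} = {ω | X ω < a}ᶜ := by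
      ext ω
      simp only [Set.mem_setOf_eq, Set.mem_compl_iff, not_lt, hψa.le_iff_ge]
    have hsub : μ {ω | X ω < a} ≤ ENNReal.ofReal (1 - z) := by
      have hunion : {ω | X ω < a} = ⋃ n : ℕ, {ω | X ω ≤ a - ((n : ℝ) + 1)⁻¹} := by
        ext ω
        simp only [Set.mem_setOf_eq, Set.mem_iUnion]
        constructor
        · intro h
          obtain ⟨n, hn⟩ := exists_nat_gt (a - X ω)⁻¹
          refine ⟨n, ?_⟩
          have hpos : (0:ℝ) < a - X ω := by linarith
          have hn1 : (a - X ω)⁻¹ < (n : ℝ) + 1 := by linarith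
          have := (inv_lt_inv₀ (by positivity) (by positivity)).mpr hn1
          rw [inv_inv] at this
          linarith
        · rintro ⟨n, hn⟩
          have : (0:ℝ) < ((n : ℝ) + 1)⁻¹ := by positivity
          linarith
      rw [hunion]
      have hdir : Monotone fun n : ℕ => {ω | X ω ≤ a - ((n : ℝ) + 1)⁻¹} := by
        intro m n hmn ω hω
        simp only [Set.mem_setOf_eq] at *
        have hc : ((m:ℝ)+1) ≤ (n:ℝ)+1 := by exact_mod_cast Nat.succ_le_succ hmn
        have : ((n : ℝ) + 1)⁻¹ ≤ ((m : ℝ) + 1)⁻¹ := inv_anti₀ (by positivity) hc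
        linarith
      rw [hdir.directed_le.measure_iUnion]
      refine iSup_le fun n => ?_
      have hxa : a - ((n : ℝ) + 1)⁻¹ < a := by
        have : (0:ℝ) < ((n : ℝ) + 1)⁻¹ := by positivity
        linarith
      have hle := hlt _ hxa
      have hne : μ {ω | X ω ≤ a - ((n : ℝ) + 1)⁻¹} ≠ ⊤ := measure_ne_top μ _
      calc μ {ω | X ω ≤ a - ((n : ℝ) + 1)⁻¹}
          = ENNReal.ofReal (cdf μ X (a - ((n : ℝ) + 1)⁻¹)) := by
            rw [cdf, ENNReal.ofReal_toReal hne]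
        _ ≤ ENNReal.ofReal (1 - z) := ENNReal.ofReal_le_ofReal hle
    have hm : MeasurableSet {ω | X ω < a} := hX measurableSet_Iio
    rw [hS, Set.mem_setOf_eq, cdf, hset,
      measure_compl hm (measure_ne_top μ _), measure_univ]
    have h1 : μ {ω | X ω < a} ≤ 1 := prob_le_one
    rw [ENNReal.toReal_sub_of_le h1 ENNReal.one_ne_top, ENNReal.toReal_one]
    have : (μ {ω | X ω < a}).toReal ≤ 1 - z := by
      have := ENNReal.toReal_le_toReal (measure_ne_top μ _) ENNReal.ofReal_ne_top |>.mpr hsub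
      rwa [ENNReal.toReal_ofReal (by linarith)] at this
    linarith
  -- Step 2: ψ a is a lower bound of S
  have hlb : ∀ y ∈ S, ψ a ≤ y := by
    intro y hy
    by_contra hya
    push_neg at hya
    -- find x' > a with y < ψ x'
    have hcont : Filter.Tendsto ψ (nhdsWithin a (Set.Ioi a)) (nhds (ψ a)) :=
      (hψc.tendsto a).mono_left nhdsWithin_le_nhds
    have hev : ∀ᶠ x in nhdsWithin a (Set.Ioi a), y < ψ x :=
      hcont.eventually_const_lt hya
    obtain ⟨x', hx'⟩ := (hev.and self_mem_nhdsWithin).exists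
    obtain ⟨hyx', hax'⟩ := hx'
    have hax' : a < x' := hax'
    have hsub : {ω | ψ (X ω) ≤ y} ⊆ {ω | X ω ≤ x'}ᶜ := by
      intro ω hω
      simp only [Set.mem_setOf_eq] at hω
      simp only [Set.mem_compl_iff, Set.mem_setOf_eq, not_le]
      have : ψ (X ω) < ψ x' := lt_of_le_of_lt hω hyx'
      exact hψa.lt_iff_gt.mp this
    have hμ : (μ {ω | ψ (X ω) ≤ y}).toReal < z := by
      have h1 : μ {ω | ψ (X ω) ≤ y} ≤ μ {ω | X ω ≤ x'}ᶜ := measure_mono hsub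
      have h2 : (μ {ω | X ω ≤ x'}ᶜ).toReal = 1 - cdf μ X x' := by
        have hm : MeasurableSet {ω | X ω ≤ x'} := hX measurableSet_Iic
        rw [measure_compl hm (measure_ne_top μ _), measure_univ,
          ENNReal.toReal_sub_of_le prob_le_one ENNReal.one_ne_top, ENNReal.toReal_one, cdf]
      have h3 := hgt x' hax'
      have h4 : (μ {ω | ψ (X ω) ≤ y}).toReal ≤ (μ {ω | X ω ≤ x'}ᶜ).toReal :=
        ENNReal.toReal_le_toReal (measure_ne_top μ _) (measure_ne_top μ _) |>.mpr h1
      rw [h2] at h4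
      linarith
    rw [hS, Set.mem_setOf_eq, cdf] at hy
    linarith
  exact IsLeast.csInf_eq ⟨hψaS, hlb⟩
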